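/- Let E be a finite-dimensional real inner product space and let V₁, …, V_k ⊆ E be linear subspaces such that the orthogonal complements V₁^⊥, …, V_k^⊥ form a direct sum (pairwise-independent family whose total sum is direct). Then for every linear subspace V ⊆ E, ∑_{j=1}^{k} dim π_{V_j}(V) ≥ (k − 1) · dim V, where π_{V_j} is the orthogonal projection onto V_j. -/

import Mathlib

open Module

lemma sum_finrank_le_of_disjoint {E : Type*} [NormedAddCommGroup E] [InnerProductSpace ℝ E]
    [FiniteDimensional ℝ E] {k : ℕ} (W : Fin k → Submodule ℝ E)
    (h : ∀ j : Fin k, Disjoint (W j) (⨆ i ∈ {i : Fin k | i ≠ j}, W i)) (s : Finset (Fin k)) :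
    ∑ j ∈ s, finrank ℝ (W j) ≤ finrank ℝ ↥(s.sup W) := by
  classical
  induction s using Finset.induction with
  | empty => simp
  | @insert a s ha ih =>
    rw [Finset.sum_insert ha, Finset.sup_insert]
    have hdisj : Disjoint (W a) (s.sup W) := by
      refine (h a).mono_right ?_
      refine Finset.sup_le fun i hi => le_iSup₂_of_le i ?_ le_rfl
      exact fun hia => ha (hia ▸ hi)
    have := Submodule.finrank_sup_add_finrank_inf_eq (W a) (s.sup W)
    rw [hdisj.eq_bot] at this
    simp only [finrank_bot, add_zero] at this
    omega

theorem stmt11 (E : Type*) [NormedAddCommGroup E] [InnerProductSpace ℝ E]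
    [FiniteDimensional ℝ E] (k : ℕ) (Vsub : Fin k → Submodule ℝ E)
    (hV : ∀ j : Fin k, (Vsub j)ᗮ ⊓ (⨆ i ∈ {i : Fin k | i ≠ j}, (Vsub i)ᗮ) = ⊥)
    (V : Submodule ℝ E) :
    (k - 1) * Module.finrank ℝ V
      ≤ ∑ j : Fin k, Module.finrank ℝ
          (V.map ((Vsub j).subtypeL.comp (Vsub j).orthogonalProjectionOnto).toLinearMap) := by
  classical
  set W : Fin k → Submodule ℝ E := fun j => V ⊓ (Vsub j)ᗮ with hW
  -- rank-nullity per j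
  have key : ∀ j : Fin k,
      finrank ℝ (V.map ((Vsub j).subtypeL.comp (Vsub j).orthogonalProjectionOnto).toLinearMap)
        + finrank ℝ (W j) = finrank ℝ V := by
    intro j
    set f := ((Vsub j).subtypeL.comp (Vsub j).orthogonalProjectionOnto).toLinearMap with hf
    have hker : LinearMap.ker f = (Vsub j)ᗮ := by
      rw [hf]
      ext x
      simp only [LinearMap.mem_ker, ContinuousLinearMap.coe_coe,
        ContinuousLinearMap.comp_apply, Submodule.subtypeL_apply]
      rw [← Submodule.orthogonalProjectionOnto_eq_zero_iff (K := Vsub j)]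
      exact ⟨fun hx => Subtype.ext hx, fun hx => by rw [hx]; rfl⟩
    have h1 : V.map f = LinearMap.range (f.comp V.subtype) := by
      rw [LinearMap.range_comp, Submodule.range_subtype]
    have h2 : LinearMap.ker (f.comp V.subtype) = Submodule.comap V.subtype ((Vsub j)ᗮ) := by
      rw [LinearMap.ker_comp, hker]
    have h3 : finrank ℝ (LinearMap.ker (f.comp V.subtype)) = finrank ℝ (W j) := by
      rw [h2]
      have : Submodule.comap V.subtype ((Vsub j)ᗮ) = Submodule.comap V.subtype (W j) := by
        rw [hW]
        simp only [Submodule.comap_inf, Submodule.comap_subtype_self, top_inf_eq]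
      rw [this]
      exact (Submodule.comapSubtypeEquivOfLe (inf_le_left : W j ≤ V)).finrank_eq
    rw [h1, ← h3]
    exact LinearMap.finrank_range_add_finrank_ker (f.comp V.subtype)
  -- independence gives the sum bound
  have hWdisj : ∀ j : Fin k, Disjoint (W j) (⨆ i ∈ {i : Fin k | i ≠ j}, W i) := by
    intro j
    have h1 : W j ≤ (Vsub j)ᗮ := inf_le_right
    have h2 : (⨆ i ∈ {i : Fin k | i ≠ j}, W i) ≤ ⨆ i ∈ {i : Fin k | i ≠ j}, (Vsub i)ᗮ :=
      iSup₂_mono fun i _ => inf_le_right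
    exact (disjoint_iff.mpr (hV j)).mono h1 h2
  have hsum : ∑ j : Fin k, finrank ℝ (W j) ≤ finrank ℝ V := by
    refine le_trans (sum_finrank_le_of_disjoint W hWdisj Finset.univ) ?_
    apply Submodule.finrank_mono
    exact Finset.sup_le fun i _ => inf_le_left
  have htot : (∑ j : Fin k, finrank ℝ
      (V.map ((Vsub j).subtypeL.comp (Vsub j).orthogonalProjectionOnto).toLinearMap))
      + ∑ j : Fin k, finrank ℝ (W j) = k * finrank ℝ V := by
    rw [← Finset.sum_add_distrib]
    simp only [key]
    simp [Finset.sum_const, Finset.card_univ]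
  have : (k - 1) * finrank ℝ V = k * finrank ℝ V - finrank ℝ V := by
    cases k with
    | zero => simp
    | succ n => rw [Nat.succ_sub_one, Nat.succ_mul]; omega
  omega
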